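/- Suppose a metric space (X,d) contains points v₀ and a_1,...,a_q (q ≥ 2 distinct points) such that d(a_i, v₀) = M for all i and d(a_i, a_j) ≥ 2(M − M_k) for all i ≠ j, where 0 ≤ M_k < M/2. Then every generalized roundness exponent p of (X,d) satisfies the inequality (1/2)·q·(q−1)·(2(M − M_k))^p ≤ q²·M^p, and hence p ≤ ln(2 + 2/(q−1)) / ln(2 − 2·M_k/M). -/

import Mathlib

open Finset

/-- `p ≥ 0` is a generalized roundness exponent of the metric space `X`. -/
def IsGRExponent (X : Type*) [MetricSpace X] (p : ℝ) : Prop :=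
  0 ≤ p ∧ ∀ (k : ℕ), 2 ≤ k → ∀ a b : Fin k → X,
    (∑ i : Fin k, ∑ j : Fin k,
        if i < j then dist (a i) (a j) ^ p + dist (b i) (b j) ^ p else 0)
      ≤ ∑ i : Fin k, ∑ j : Fin k, dist (a i) (b j) ^ p

/-- A star-like configuration forces an upper bound on the generalized roundness. -/
theorem grExponent_star_bound (X : Type*) [MetricSpace X]
    (q : ℕ) (hq : 2 ≤ q) (v₀ : X) (a : Fin q → X) (ha : Function.Injective a)
    (M Mk : ℝ) (hMk0 : 0 ≤ Mk) (hMk : Mk < M / 2)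
    (hdist : ∀ i, dist (a i) v₀ = M)
    (hsep : ∀ i j, i ≠ j → 2 * (M - Mk) ≤ dist (a i) (a j))
    (p : ℝ) (hp : IsGRExponent X p) :
    (1 / 2) * q * (q - 1) * (2 * (M - Mk)) ^ p ≤ (q : ℝ) ^ 2 * M ^ p ∧
      p ≤ Real.log (2 + 2 / ((q : ℝ) - 1)) / Real.log (2 - 2 * Mk / M) := by
  have hM : 0 < M := by linarith
  obtain ⟨hp0, hGR⟩ := hp
  have key := hGR q hq a (fun _ => v₀)
  set C : ℝ := (2 * (M - Mk)) ^ p with hC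
  have hCpos : 0 < C := Real.rpow_pos_of_pos (by linarith) p
  have hqr : (2 : ℝ) ≤ (q : ℝ) := by exact_mod_cast hq
  -- RHS of GR inequality
  have hRHS : (∑ i : Fin q, ∑ j : Fin q, dist (a i) ((fun _ => v₀) j) ^ p)
      = (q : ℝ) ^ 2 * M ^ p := by
    simp [hdist, Finset.sum_const, card_univ]
    ring
  -- counting lemma : sum of ite over i < j
  have hcount : (∑ i : Fin q, ∑ j : Fin q, (if i < j then C else 0))
      = (1 / 2) * q * (q - 1) * C := by
    have htri : ∀ i j : Fin q,
        (if i < j then C else 0) + (if j < i then C else 0)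
          + (if i = j then C else 0) = C := by
      intro i j
      rcases lt_trichotomy i j with h | h | h
      · simp [h, h.ne, asymm h]
      · subst h; simp
      · simp [h, h.ne', asymm h]
    have hsum : (∑ i : Fin q, ∑ j : Fin q,
        ((if i < j then C else 0) + (if j < i then C else 0)
          + (if i = j then C else 0))) = (q : ℝ) ^ 2 * C := by
      simp only [htri]
      simp [Finset.sum_const, card_univ]
      ring
    have hswap : (∑ i : Fin q, ∑ j : Fin q, (if j < i then C else 0))
        = ∑ i : Fin q, ∑ j : Fin q, (if i < j then C else 0) := by
      rw [Finset.sum_comm]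
    have hdiag : (∑ i : Fin q, ∑ j : Fin q, (if i = j then C else 0))
        = (q : ℝ) * C := by
      simp [Finset.sum_ite_eq, Finset.sum_const, card_univ]
    have hexp : (∑ i : Fin q, ∑ j : Fin q,
        ((if i < j then C else 0) + (if j < i then C else 0)
          + (if i = j then C else 0)))
        = (∑ i : Fin q, ∑ j : Fin q, (if i < j then C else 0))
          + (∑ i : Fin q, ∑ j : Fin q, (if j < i then C else 0))
          + (∑ i : Fin q, ∑ j : Fin q, (if i = j then C else 0)) := by
      simp [Finset.sum_add_distrib]
    rw [hexp, hswap, hdiag] at hsum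
    linarith
  -- bound LHS of GR inequality from below
  have hLHS : (1 / 2) * q * (q - 1) * C
      ≤ ∑ i : Fin q, ∑ j : Fin q,
          if i < j then dist (a i) (a j) ^ p
            + dist ((fun _ => v₀) i) ((fun _ => v₀) j) ^ p else 0 := by
    rw [← hcount]
    refine Finset.sum_le_sum fun i _ => Finset.sum_le_sum fun j _ => ?_
    by_cases h : i < j
    · simp only [h, if_true]
      have h1 : C ≤ dist (a i) (a j) ^ p :=
        Real.rpow_le_rpow (by linarith) (hsep i j h.ne) hp0
      have h2 : (0 : ℝ) ≤ dist ((fun _ => v₀) i) ((fun _ => v₀) j) ^ p :=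
        Real.rpow_nonneg dist_nonneg p
      linarith
    · simp [h]
  have part1 : (1 / 2) * q * (q - 1) * (2 * (M - Mk)) ^ p ≤ (q : ℝ) ^ 2 * M ^ p := by
    calc (1 / 2) * q * (q - 1) * C ≤ _ := hLHS
      _ ≤ _ := key
      _ = (q : ℝ) ^ 2 * M ^ p := hRHS
  refine ⟨part1, ?_⟩
  -- now derive the log bound
  set c : ℝ := 2 - 2 * Mk / M with hc
  have hc1 : 1 < c := by
    have : 2 * Mk / M < 1 := by rw [div_lt_one hM]; linarith
    simp only [hc]; linarith
  have hc0 : 0 < c := by linarith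
  have hcM : c * M = 2 * (M - Mk) := by
    rw [hc, sub_mul, div_mul_cancel₀ _ hM.ne']
    ring
  have hMp : 0 < M ^ p := Real.rpow_pos_of_pos hM p
  have hsplit : (2 * (M - Mk)) ^ p = c ^ p * M ^ p := by
    rw [← hcM, Real.mul_rpow hc0.le hM.le]
  have hq1 : (0 : ℝ) < (q : ℝ) - 1 := by linarith
  have hstep : (1 / 2) * q * ((q : ℝ) - 1) * c ^ p ≤ (q : ℝ) ^ 2 := by
    have := part1
    rw [hsplit] at this
    have h' : ((1 / 2) * q * ((q : ℝ) - 1) * c ^ p) * M ^ p ≤ (q : ℝ) ^ 2 * M ^ p := by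
      linarith [this]
    exact le_of_mul_le_mul_right h' hMp
  have hcp0 : 0 < c ^ p := Real.rpow_pos_of_pos hc0 p
  have hcple : c ^ p ≤ 2 + 2 / ((q : ℝ) - 1) := by
    have h2 : c ^ p ≤ 2 * (q : ℝ) / ((q : ℝ) - 1) := by
      rw [le_div_iff₀ hq1]
      nlinarith [hstep, hcp0.le, hqr]
    have heq : 2 * (q : ℝ) / ((q : ℝ) - 1) = 2 + 2 / ((q : ℝ) - 1) := by
      field_simp
      ring
    linarith [heq ▸ h2]
  have hlogc : 0 < Real.log c := Real.log_pos hc1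
  rw [le_div_iff₀ hlogc]
  calc p * Real.log c = Real.log (c ^ p) := (Real.log_rpow hc0 p).symm
    _ ≤ Real.log (2 + 2 / ((q : ℝ) - 1)) := Real.log_le_log hcp0 hcple
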